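/- Let T > 0 be a real number, let d, τ, N ≥ 1 be integers, let a : ℝ → ℂ be continuous with a(t) = 0 for all t ∉ [0, (N+1)T], and let ξ, η : ℝ → ℂ be continuous functions. Set ζ = ξ + η. With b and v defined from a as follows: b(t) = ∑_{k=0}^∞ C(k+d−1, d−1) · a(t + kτT) for t ∈ [0, (N+1)T] and b(t) = 0 otherwise, and v(t) = ∑_{l=⌈−t/(τT)⌉}^{d} (−1)^l C(d,l) b(t + lτT) for t ∈ [−dτT, 0), one has ∫_0^{(N+1)T} a(t) ξ(t) dt = ∫_0^{(N+1)T} b(t) · ( ∑_{l=0}^{d} (−1)^l C(d,l) ζ(t − lτT) ) dt − ∫_{−dτT}^{0} v(t) ζ(t) dt − ∫_0^{(N+1)T} a(t) η(t) dt. -/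

import Mathlib

open MeasureTheory

lemma coeff_one_sub_pow' (d n : ℕ) :
    (PowerSeries.coeff n) ((1 - PowerSeries.X : PowerSeries ℂ) ^ d)
      = (-1 : ℂ) ^ n * (d.choose n : ℂ) := by
  have h : (1 - PowerSeries.X : PowerSeries ℂ) ^ d = (-PowerSeries.X + 1) ^ d := by ring
  rw [h, add_pow, map_sum]
  have : ∀ m ∈ Finset.range (d + 1),
      (PowerSeries.coeff n) ((-PowerSeries.X : PowerSeries ℂ) ^ m * 1 ^ (d - m) * (d.choose m : PowerSeries ℂ))
        = if n = m then (-1 : ℂ) ^ n * (d.choose n : ℂ) else 0 := by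
    intro m hm
    rw [neg_pow, one_pow, mul_one]
    have : ((-1 : PowerSeries ℂ) ^ m * PowerSeries.X ^ m * (d.choose m : PowerSeries ℂ))
        = PowerSeries.C ((-1 : ℂ) ^ m * (d.choose m : ℂ)) * PowerSeries.X ^ m := by
      rw [map_mul, map_pow, map_neg, map_one, map_natCast]
      ring
    rw [this, PowerSeries.coeff_C_mul, PowerSeries.coeff_X_pow]
    by_cases hnm : n = m
    · subst hnm; simp
    · simp [hnm]
  rw [Finset.sum_congr rfl this, Finset.sum_ite_eq (Finset.range (d+1)) n]
  by_cases hn : n ∈ Finset.range (d+1)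
  · rw [if_pos hn]
  · rw [if_neg hn]
    have : d.choose n = 0 := Nat.choose_eq_zero_of_lt (by simpa using hn)
    simp [this]

lemma comb_ident' (d : ℕ) (hd : 1 ≤ d) (m : ℕ) :
    ∑ p ∈ Finset.HasAntidiagonal.antidiagonal m,
      (-1 : ℂ) ^ p.1 * (d.choose p.1 : ℂ) * (((p.2 + d - 1).choose (d - 1) : ℕ) : ℂ)
      = if m = 0 then 1 else 0 := by
  have h1 : ((1 - PowerSeries.X : PowerSeries ℂ) ^ d) *
      (PowerSeries.mk fun n => ((d - 1 + n).choose (d - 1) : ℂ)) = 1 := by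
    have h2 := (PowerSeries.invOneSubPow ℂ d).inv_val
    rwa [PowerSeries.invOneSubPow_inv_eq_one_sub_pow,
      PowerSeries.invOneSubPow_val_eq_mk_sub_one_add_choose_of_pos _ _ (by omega)] at h2
  have h3 := congrArg (PowerSeries.coeff m) h1
  rw [PowerSeries.coeff_mul, PowerSeries.coeff_one] at h3
  rw [← h3]
  apply Finset.sum_congr rfl
  intro p hp
  rw [coeff_one_sub_pow', PowerSeries.coeff_mk]
  have : d - 1 + p.2 = p.2 + d - 1 := by omega
  rw [this]

lemma triangle_sum' (f : ℕ → ℕ → ℂ) (L K : ℕ)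
    (hf : ∀ l k, L ≤ l ∨ K ≤ k → f l k = 0) :
    ∑ m ∈ Finset.range (L + K), ∑ p ∈ Finset.HasAntidiagonal.antidiagonal m, f p.1 p.2
      = ∑ l ∈ Finset.range L, ∑ k ∈ Finset.range K, f l k := by
  have h1 : ∀ m, ∑ p ∈ Finset.HasAntidiagonal.antidiagonal m, f p.1 p.2
      = ∑ i ∈ Finset.range (m + 1), f i (m - i) :=
    fun m => Finset.Nat.sum_antidiagonal_eq_sum_range_succ_mk _ m
  simp only [h1]
  rw [Finset.sum_range_diag_flip (L + K) f]
  have h2 : ∀ m ∈ Finset.range (L + K),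
      ∑ k ∈ Finset.range (L + K - m), f m k = ∑ k ∈ Finset.range K, f m k := by
    intro m hm
    by_cases hmL : m < L
    · refine (Finset.sum_subset (Finset.range_subset_range.2 (by omega)) ?_).symm
      intro k _ hk2
      exact hf m k (Or.inr (by simp at hk2 ⊢; omega))
    · rw [Finset.sum_congr rfl (fun k _ => hf m k (Or.inl (by omega))),
        Finset.sum_congr rfl (fun k _ => hf m k (Or.inl (by omega)))]
      simp
  rw [Finset.sum_congr rfl h2]
  refine (Finset.sum_subset (Finset.range_subset_range.2 (by omega)) ?_).symm
  intro l _ hl2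
  exact Finset.sum_eq_zero fun k _ => hf l k (Or.inl (by simp at hl2; omega))

theorem functional_representation_noise (T : ℝ) (hT : 0 < T) (d τ N : ℕ)
    (hd : 1 ≤ d) (hτ : 1 ≤ τ) (hN : 1 ≤ N)
    (a ξ η : ℝ → ℂ) (ha_cont : Continuous a)
    (ha_supp : ∀ t : ℝ, t ∉ Set.Icc (0 : ℝ) (((N : ℝ) + 1) * T) → a t = 0)
    (hξ : Continuous ξ) (hη : Continuous η)
    (b : ℝ → ℂ)
    (hb_in : ∀ t ∈ Set.Icc (0 : ℝ) (((N : ℝ) + 1) * T),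
      b t = ∑' k : ℕ, (((k + d - 1).choose (d - 1) : ℕ) : ℂ) * a (t + (k : ℝ) * (τ : ℝ) * T))
    (hb_out : ∀ t : ℝ, t ∉ Set.Icc (0 : ℝ) (((N : ℝ) + 1) * T) → b t = 0)
    (v : ℝ → ℂ)
    (hv : ∀ t ∈ Set.Ico (-((d : ℝ) * (τ : ℝ) * T)) (0 : ℝ),
      v t = ∑ l ∈ Finset.Icc (⌈(-t) / ((τ : ℝ) * T)⌉.toNat) d,
        (-1 : ℂ) ^ l * (d.choose l : ℂ) * b (t + (l : ℝ) * (τ : ℝ) * T)) :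
    (∫ t in (0 : ℝ)..(((N : ℝ) + 1) * T), a t * ξ t) =
      (∫ t in (0 : ℝ)..(((N : ℝ) + 1) * T),
        b t * ∑ l ∈ Finset.range (d + 1),
          (-1 : ℂ) ^ l * (d.choose l : ℂ) *
            (ξ (t - (l : ℝ) * (τ : ℝ) * T) + η (t - (l : ℝ) * (τ : ℝ) * T))) -
      (∫ t in (-((d : ℝ) * (τ : ℝ) * T))..(0 : ℝ), v t * (ξ t + η t)) -
      ∫ t in (0 : ℝ)..(((N : ℝ) + 1) * T), a t * η t := by
  set S : ℝ := ((N : ℝ) + 1) * T with hSdef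
  have hτR : (1 : ℝ) ≤ (τ : ℝ) := by exact_mod_cast hτ
  have hτpos : (0 : ℝ) < (τ : ℝ) := by linarith
  have hS0 : (0 : ℝ) ≤ S := by positivity
  have hdh0 : (0 : ℝ) < (d : ℝ) * (τ : ℝ) * T := by
    have hd0 : (0 : ℝ) < (d : ℝ) := by exact_mod_cast hd
    exact mul_pos (mul_pos hd0 hτpos) hT
  set ζ : ℝ → ℂ := fun t => ξ t + η t with hζdef
  have hζ : Continuous ζ := hξ.add hη
  -- the continuous version of b on [0, ∞)
  set B : ℝ → ℂ := fun t => ∑ k ∈ Finset.range (N + 2),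
      (((k + d - 1).choose (d - 1) : ℕ) : ℂ) * a (t + (k : ℝ) * (τ : ℝ) * T) with hBdef
  have hBcont : Continuous B := by
    apply continuous_finset_sum
    intro k _
    exact continuous_const.mul (ha_cont.comp (continuous_id.add continuous_const))
  -- vanishing of a for large arguments
  have havan : ∀ s : ℝ, 0 ≤ s → ∀ m : ℕ, N + 2 ≤ m → a (s + (m : ℝ) * (τ : ℝ) * T) = 0 := by
    intro s hs m hm
    apply ha_supp
    rw [Set.mem_Icc, not_and_or]
    right
    push_neg
    have hm' : ((N : ℝ) + 2) ≤ (m : ℝ) := by exact_mod_cast hm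
    have h1 : ((N : ℝ) + 2) * T ≤ (m : ℝ) * T := mul_le_mul_of_nonneg_right hm' hT.le
    have h2 : (m : ℝ) * T ≤ (m : ℝ) * ((τ : ℝ) * T) := by
      have hm0 : (0 : ℝ) ≤ (m : ℝ) := by positivity
      have : T ≤ (τ : ℝ) * T := by nlinarith
      exact mul_le_mul_of_nonneg_left this hm0
    rw [hSdef]
    nlinarith
  -- b equals the indicator of B
  have hbB : ∀ t : ℝ, b t = (Set.Icc (0 : ℝ) S).indicator B t := by
    intro t
    by_cases ht : t ∈ Set.Icc (0 : ℝ) S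
    · rw [Set.indicator_of_mem ht, hb_in t ht, hBdef]
      refine tsum_eq_sum ?_
      intro k hk
      rw [havan t ht.1 k (by simpa using hk), mul_zero]
    · rw [Set.indicator_of_notMem ht, hb_out t ht]
  have hbB2 : ∀ t : ℝ, 0 ≤ t → b t = B t := by
    intro t ht
    by_cases htS : t ≤ S
    · rw [hbB t, Set.indicator_of_mem (Set.mem_Icc.2 ⟨ht, htS⟩)]
    · rw [hbB t, Set.indicator_of_notMem (by simp [Set.mem_Icc, htS])]
      rw [hBdef]
      refine (Finset.sum_eq_zero ?_).symm
      intro k _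
      have : a (t + (k : ℝ) * (τ : ℝ) * T) = 0 := by
        apply ha_supp
        rw [Set.mem_Icc, not_and_or]
        right
        push_neg
        have : (0:ℝ) ≤ (k : ℝ) * (τ : ℝ) * T := by positivity
        linarith [not_le.1 htS]
      rw [this, mul_zero]
  -- key difference identity
  have hW : ∀ s : ℝ, 0 ≤ s →
      ∑ l ∈ Finset.range (d + 1), (-1 : ℂ) ^ l * (d.choose l : ℂ) * b (s + (l : ℝ) * (τ : ℝ) * T)
        = a s := by
    intro s hs
    have hexp : ∀ l ∈ Finset.range (d + 1),
        (-1 : ℂ) ^ l * (d.choose l : ℂ) * b (s + (l : ℝ) * (τ : ℝ) * T)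
          = ∑ k ∈ Finset.range (N + 2), (-1 : ℂ) ^ l * (d.choose l : ℂ) *
              ((((k + d - 1).choose (d - 1) : ℕ) : ℂ) * a (s + ((l + k : ℕ) : ℝ) * (τ : ℝ) * T)) := by
      intro l _
      rw [hbB2 _ (by positivity), hBdef]
      simp only [Finset.mul_sum]
      apply Finset.sum_congr rfl
      intro k _
      have : s + (l : ℝ) * (τ : ℝ) * T + (k : ℝ) * (τ : ℝ) * T
          = s + ((l + k : ℕ) : ℝ) * (τ : ℝ) * T := by push_cast; ring
      rw [this]
    rw [Finset.sum_congr rfl hexp]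
    have := triangle_sum' (fun l k => (-1 : ℂ) ^ l * (d.choose l : ℂ) *
        ((((k + d - 1).choose (d - 1) : ℕ) : ℂ) * a (s + ((l + k : ℕ) : ℝ) * (τ : ℝ) * T)))
      (d + 1) (N + 2) ?_
    · rw [← this]
      have hm : ∀ m ∈ Finset.range (d + 1 + (N + 2)),
          (∑ p ∈ Finset.HasAntidiagonal.antidiagonal m, (-1 : ℂ) ^ p.1 * (d.choose p.1 : ℂ) *
            ((((p.2 + d - 1).choose (d - 1) : ℕ) : ℂ) * a (s + ((p.1 + p.2 : ℕ) : ℝ) * (τ : ℝ) * T)))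
          = (if m = 0 then (1:ℂ) else 0) * a (s + (m : ℝ) * (τ : ℝ) * T) := by
        intro m _
        rw [← comb_ident' d hd m, Finset.sum_mul]
        apply Finset.sum_congr rfl
        intro p hp
        rw [Finset.HasAntidiagonal.mem_antidiagonal] at hp
        rw [hp]
        ring
      rw [Finset.sum_congr rfl hm, Finset.sum_eq_single 0]
      · simp
      · intro m _ hm0
        simp [hm0]
      · intro habs
        exact absurd (Finset.mem_range.2 (by omega)) habs
    · intro l k hlk
      rcases hlk with hl | hk
      · have : d.choose l = 0 := Nat.choose_eq_zero_of_lt (by omega)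
        simp [this]
      · have h0 : a (s + ((l + k : ℕ) : ℝ) * (τ : ℝ) * T) = 0 := havan s hs (l + k) (by omega)
        rw [h0, mul_zero, mul_zero]
  -- v equals the full alternating sum on [-dτT, 0)
  have hv' : ∀ s ∈ Set.Ico (-((d : ℝ) * (τ : ℝ) * T)) (0 : ℝ),
      v s = ∑ l ∈ Finset.range (d + 1),
        (-1 : ℂ) ^ l * (d.choose l : ℂ) * b (s + (l : ℝ) * (τ : ℝ) * T) := by
    intro s hs
    rw [hv s hs]
    apply Finset.sum_subset
    · intro l hl
      rw [Finset.mem_Icc] at hl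
      exact Finset.mem_range.2 (by omega)
    · intro l hl hl2
      have hl' : l < (⌈(-s) / ((τ : ℝ) * T)⌉).toNat := by
        rw [Finset.mem_range] at hl
        rw [Finset.mem_Icc] at hl2
        omega
      have : (l : ℝ) < (-s) / ((τ : ℝ) * T) := by
        have h1 : (l : ℤ) < ⌈(-s) / ((τ : ℝ) * T)⌉ := Int.lt_toNat.1 hl'
        exact_mod_cast Int.lt_ceil.1 h1
      have hneg : s + (l : ℝ) * (τ : ℝ) * T < 0 := by
        have hτT : (0:ℝ) < (τ : ℝ) * T := by positivity
        rw [lt_div_iff₀ hτT] at this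
        nlinarith
      rw [hb_out _ (by rw [Set.mem_Icc]; push_neg; intro habs; linarith), mul_zero]
  -- b ∘ (shift) as an indicator of a continuous function
  have hbind : ∀ c : ℝ, (fun s : ℝ => b (s + c))
      = (Set.Icc (-c) (S - c)).indicator (fun u => B (u + c)) := by
    intro c
    funext s
    have hmem : s ∈ Set.Icc (-c) (S - c) ↔ s + c ∈ Set.Icc (0 : ℝ) S := by
      simp only [Set.mem_Icc]
      constructor
      · rintro ⟨h1, h2⟩; constructor <;> linarith
      · rintro ⟨h1, h2⟩; constructor <;> linarith
    rw [hbB (s + c)]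
    by_cases hs : s ∈ Set.Icc (-c) (S - c)
    · rw [Set.indicator_of_mem hs, Set.indicator_of_mem (hmem.1 hs)]
    · rw [Set.indicator_of_notMem hs,
        Set.indicator_of_notMem (fun habs => hs (hmem.2 habs))]
  -- integrability of shifted b against continuous functions
  have hInt : ∀ (c x y : ℝ) (g : ℝ → ℂ), Continuous g →
      IntervalIntegrable (fun s => b (s + c) * g s) volume x y := by
    intro c x y g hg
    have heq : (fun s => b (s + c) * g s)
        = (Set.Icc (-c) (S - c)).indicator (fun u => B (u + c) * g u) := by
      funext s
      have hbs := congrFun (hbind c) s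
      by_cases hs : s ∈ Set.Icc (-c) (S - c)
      · rw [Set.indicator_of_mem hs] at hbs ⊢
        rw [hbs]
      · rw [Set.indicator_of_notMem hs] at hbs ⊢
        rw [hbs, zero_mul]
    have hF : IntervalIntegrable (fun u => B (u + c) * g u) volume x y :=
      ((hBcont.comp (continuous_id.add continuous_const)).mul hg).intervalIntegrable x y
    rw [heq, intervalIntegrable_iff]
    exact (intervalIntegrable_iff.1 hF).indicator measurableSet_Icc
  have hInt0 : ∀ (x y : ℝ) (g : ℝ → ℂ), Continuous g →
      IntervalIntegrable (fun s => b s * g s) volume x y := by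
    intro x y g hg
    have := hInt 0 x y g hg
    simpa using this
  -- the shift step for each l
  have hstep2 : ∀ l ∈ Finset.range (d + 1),
      (∫ t in (0 : ℝ)..S, b t * ((-1 : ℂ) ^ l * (d.choose l : ℂ) * (ξ (t - (l : ℝ) * (τ : ℝ) * T) + η (t - (l : ℝ) * (τ : ℝ) * T))))
        = ∫ s in (-((d : ℝ) * (τ : ℝ) * T))..S,
            b (s + (l : ℝ) * (τ : ℝ) * T) * ((-1 : ℂ) ^ l * (d.choose l : ℂ) * (ξ s + η s)) := by
    intro l hl
    have hld : (l : ℝ) ≤ (d : ℝ) := by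
      have hld' : l ≤ d := by rw [Finset.mem_range] at hl; omega
      exact_mod_cast hld'
    set c : ℝ := (l : ℝ) * (τ : ℝ) * T with hcdef
    have hc0 : 0 ≤ c := by positivity
    have hcd : c ≤ (d : ℝ) * (τ : ℝ) * T := by
      rw [hcdef]
      have h1 : (l : ℝ) * (τ : ℝ) ≤ (d : ℝ) * (τ : ℝ) := mul_le_mul_of_nonneg_right hld hτpos.le
      exact mul_le_mul_of_nonneg_right h1 hT.le
    have hcv := intervalIntegral.integral_comp_add_right (a := -c) (b := S - c)
      (fun t => b t * ((-1 : ℂ) ^ l * (d.choose l : ℂ) * (ξ (t - c) + η (t - c)))) c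
    rw [show -c + c = (0 : ℝ) by ring, show S - c + c = S by ring] at hcv
    have hcv2 : (∫ x in (-c)..(S - c),
        b (x + c) * ((-1 : ℂ) ^ l * (d.choose l : ℂ) * (ξ x + η x)))
          = ∫ t in (0 : ℝ)..S, b t * ((-1 : ℂ) ^ l * (d.choose l : ℂ) * (ξ (t - c) + η (t - c))) := by
      rw [← hcv]
      apply intervalIntegral.integral_congr
      intro x _
      simp only [add_sub_cancel_right]
    have hz1 : (∫ s in (-((d : ℝ) * (τ : ℝ) * T))..(-c),
        b (s + c) * ((-1 : ℂ) ^ l * (d.choose l : ℂ) * (ξ s + η s))) = 0 := by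
      have hae : ∀ᵐ x : ℝ, x ∈ Set.uIoc (-((d : ℝ) * (τ : ℝ) * T)) (-c) →
          b (x + c) * ((-1 : ℂ) ^ l * (d.choose l : ℂ) * (ξ x + η x)) = (fun _ => (0 : ℂ)) x := by
        have hsing : ∀ᵐ x : ℝ, x ∉ ({-c} : Set ℝ) :=
          measure_eq_zero_iff_ae_notMem.mp (measure_singleton _)
        filter_upwards [hsing] with x hx hxmem
        rw [Set.uIoc_of_le (by linarith : -((d : ℝ) * (τ : ℝ) * T) ≤ -c)] at hxmem
        have hxne : x ≠ -c := by simpa using hx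
        have hxlt : x < -c := lt_of_le_of_ne hxmem.2 hxne
        have : x + c < 0 := by linarith
        rw [hb_out _ (by rw [Set.mem_Icc]; push_neg; intro habs; linarith), zero_mul]
      rw [intervalIntegral.integral_congr_ae hae, intervalIntegral.integral_zero]
    have hz2 : (∫ s in (S - c)..S,
        b (s + c) * ((-1 : ℂ) ^ l * (d.choose l : ℂ) * (ξ s + η s))) = 0 := by
      have hae : ∀ᵐ x : ℝ, x ∈ Set.uIoc (S - c) S →
          b (x + c) * ((-1 : ℂ) ^ l * (d.choose l : ℂ) * (ξ x + η x)) = (fun _ => (0 : ℂ)) x := by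
        refine Filter.Eventually.of_forall ?_
        intro x hxmem
        rw [Set.uIoc_of_le (by linarith : S - c ≤ S)] at hxmem
        have : S < x + c := by linarith [hxmem.1]
        rw [hb_out _ (by rw [Set.mem_Icc]; push_neg; intro habs; linarith), zero_mul]
      rw [intervalIntegral.integral_congr_ae hae, intervalIntegral.integral_zero]
    have hi1 := hInt c (-((d : ℝ) * (τ : ℝ) * T)) (-c)
      (fun s => (-1 : ℂ) ^ l * (d.choose l : ℂ) * (ξ s + η s))
      (continuous_const.mul (hξ.add hη))
    have hi2 := hInt c (-c) (S - c)
      (fun s => (-1 : ℂ) ^ l * (d.choose l : ℂ) * (ξ s + η s))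
      (continuous_const.mul (hξ.add hη))
    have hi3 := hInt c (S - c) S
      (fun s => (-1 : ℂ) ^ l * (d.choose l : ℂ) * (ξ s + η s))
      (continuous_const.mul (hξ.add hη))
    have hi12 := hInt c (-((d : ℝ) * (τ : ℝ) * T)) (S - c)
      (fun s => (-1 : ℂ) ^ l * (d.choose l : ℂ) * (ξ s + η s))
      (continuous_const.mul (hξ.add hη))
    have hadd1 := intervalIntegral.integral_add_adjacent_intervals hi1 hi2
    have hadd2 := intervalIntegral.integral_add_adjacent_intervals hi12 hi3
    rw [← hcv2, ← hadd2, ← hadd1, hz1, hz2, zero_add, add_zero]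
  -- integrability of the summed function
  have hWrw : (fun s => (∑ l ∈ Finset.range (d + 1),
        (-1 : ℂ) ^ l * (d.choose l : ℂ) * b (s + (l : ℝ) * (τ : ℝ) * T)) * (ξ s + η s))
      = fun s => ∑ l ∈ Finset.range (d + 1),
          b (s + (l : ℝ) * (τ : ℝ) * T) * ((-1 : ℂ) ^ l * (d.choose l : ℂ) * (ξ s + η s)) := by
    funext s
    rw [Finset.sum_mul]
    exact Finset.sum_congr rfl fun l _ => by ring
  have hWint : ∀ x y : ℝ, IntervalIntegrable
      (fun s => (∑ l ∈ Finset.range (d + 1),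
        (-1 : ℂ) ^ l * (d.choose l : ℂ) * b (s + (l : ℝ) * (τ : ℝ) * T)) * (ξ s + η s))
      volume x y := by
    intro x y
    rw [hWrw]
    have : (fun s => ∑ l ∈ Finset.range (d + 1),
        b (s + (l : ℝ) * (τ : ℝ) * T) * ((-1 : ℂ) ^ l * (d.choose l : ℂ) * (ξ s + η s)))
        = ∑ l ∈ Finset.range (d + 1), fun s =>
            b (s + (l : ℝ) * (τ : ℝ) * T) * ((-1 : ℂ) ^ l * (d.choose l : ℂ) * (ξ s + η s)) := by
      funext s
      simp
    rw [this]
    exact IntervalIntegrable.sum _ fun l _ =>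
      hInt _ x y _ (continuous_const.mul (hξ.add hη))
  -- the key identity
  have KEY : (∫ t in (0 : ℝ)..S,
        b t * ∑ l ∈ Finset.range (d + 1),
          (-1 : ℂ) ^ l * (d.choose l : ℂ) *
            (ξ (t - (l : ℝ) * (τ : ℝ) * T) + η (t - (l : ℝ) * (τ : ℝ) * T)))
      = (∫ t in (-((d : ℝ) * (τ : ℝ) * T))..(0 : ℝ), v t * (ξ t + η t))
          + ∫ t in (0 : ℝ)..S, a t * (ξ t + η t) := by
    have e1 : (∫ t in (0 : ℝ)..S,
          b t * ∑ l ∈ Finset.range (d + 1),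
            (-1 : ℂ) ^ l * (d.choose l : ℂ) *
              (ξ (t - (l : ℝ) * (τ : ℝ) * T) + η (t - (l : ℝ) * (τ : ℝ) * T)))
        = ∫ t in (0 : ℝ)..S, ∑ l ∈ Finset.range (d + 1),
            b t * ((-1 : ℂ) ^ l * (d.choose l : ℂ) *
              (ξ (t - (l : ℝ) * (τ : ℝ) * T) + η (t - (l : ℝ) * (τ : ℝ) * T))) := by
      apply intervalIntegral.integral_congr
      intro t _
      simp only [Finset.mul_sum]
    have e1b : (∫ t in (0 : ℝ)..S, ∑ l ∈ Finset.range (d + 1),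
          b t * ((-1 : ℂ) ^ l * (d.choose l : ℂ) *
            (ξ (t - (l : ℝ) * (τ : ℝ) * T) + η (t - (l : ℝ) * (τ : ℝ) * T))))
        = ∑ l ∈ Finset.range (d + 1), ∫ t in (0 : ℝ)..S,
            b t * ((-1 : ℂ) ^ l * (d.choose l : ℂ) *
              (ξ (t - (l : ℝ) * (τ : ℝ) * T) + η (t - (l : ℝ) * (τ : ℝ) * T))) := by
      refine intervalIntegral.integral_finset_sum (fun l _ => ?_)
      exact hInt0 0 S (fun t => (-1 : ℂ) ^ l * (d.choose l : ℂ) *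
        (ξ (t - (l : ℝ) * (τ : ℝ) * T) + η (t - (l : ℝ) * (τ : ℝ) * T)))
        (continuous_const.mul ((hξ.comp (continuous_sub_right _)).add
          (hη.comp (continuous_sub_right _))))
    have e3 : (∫ s in (-((d : ℝ) * (τ : ℝ) * T))..S, ∑ l ∈ Finset.range (d + 1),
          b (s + (l : ℝ) * (τ : ℝ) * T) * ((-1 : ℂ) ^ l * (d.choose l : ℂ) * (ξ s + η s)))
        = ∑ l ∈ Finset.range (d + 1), ∫ s in (-((d : ℝ) * (τ : ℝ) * T))..S,
            b (s + (l : ℝ) * (τ : ℝ) * T) * ((-1 : ℂ) ^ l * (d.choose l : ℂ) * (ξ s + η s)) := by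
      refine intervalIntegral.integral_finset_sum (fun l _ => ?_)
      exact hInt ((l : ℝ) * (τ : ℝ) * T) (-((d : ℝ) * (τ : ℝ) * T)) S
        (fun s => (-1 : ℂ) ^ l * (d.choose l : ℂ) * (ξ s + η s))
        (continuous_const.mul (hξ.add hη))
    rw [e1, e1b, Finset.sum_congr rfl hstep2, ← e3]
    have e2 : (∫ s in (-((d : ℝ) * (τ : ℝ) * T))..S, ∑ l ∈ Finset.range (d + 1),
          b (s + (l : ℝ) * (τ : ℝ) * T) * ((-1 : ℂ) ^ l * (d.choose l : ℂ) * (ξ s + η s)))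
        = ∫ s in (-((d : ℝ) * (τ : ℝ) * T))..S, (∑ l ∈ Finset.range (d + 1),
            (-1 : ℂ) ^ l * (d.choose l : ℂ) * b (s + (l : ℝ) * (τ : ℝ) * T)) * (ξ s + η s) := by
      apply intervalIntegral.integral_congr
      intro s _
      show ∑ l ∈ Finset.range (d + 1),
          b (s + (l : ℝ) * (τ : ℝ) * T) * ((-1 : ℂ) ^ l * (d.choose l : ℂ) * (ξ s + η s))
        = (∑ l ∈ Finset.range (d + 1),
            (-1 : ℂ) ^ l * (d.choose l : ℂ) * b (s + (l : ℝ) * (τ : ℝ) * T)) * (ξ s + η s)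
      rw [Finset.sum_mul]
      exact Finset.sum_congr rfl fun l _ => by ring
    rw [e2, ← intervalIntegral.integral_add_adjacent_intervals
      (hWint (-((d : ℝ) * (τ : ℝ) * T)) 0) (hWint 0 S)]
    congr 1
    · -- the [-dτT, 0] part equals the v-integral
      apply intervalIntegral.integral_congr_ae
      have hsing : ∀ᵐ x : ℝ, x ∉ ({(0 : ℝ)} : Set ℝ) :=
        measure_eq_zero_iff_ae_notMem.mp (measure_singleton _)
      filter_upwards [hsing] with x hx hxmem
      rw [Set.uIoc_of_le (by linarith : -((d : ℝ) * (τ : ℝ) * T) ≤ (0 : ℝ))] at hxmem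
      have hxne : x ≠ 0 := by simpa using hx
      have hxlt : x < 0 := lt_of_le_of_ne hxmem.2 hxne
      have hxmem' : x ∈ Set.Ico (-((d : ℝ) * (τ : ℝ) * T)) (0 : ℝ) :=
        ⟨le_of_lt hxmem.1, hxlt⟩
      show (∑ l ∈ Finset.range (d + 1),
          (-1 : ℂ) ^ l * (d.choose l : ℂ) * b (x + (l : ℝ) * (τ : ℝ) * T)) * (ξ x + η x)
        = v x * (ξ x + η x)
      rw [hv' x hxmem']
    · -- the [0, S] part equals the a-integral
      apply intervalIntegral.integral_congr
      intro t ht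
      rw [Set.uIcc_of_le hS0] at ht
      show (∑ l ∈ Finset.range (d + 1),
          (-1 : ℂ) ^ l * (d.choose l : ℂ) * b (t + (l : ℝ) * (τ : ℝ) * T)) * (ξ t + η t)
        = a t * (ξ t + η t)
      rw [hW t ht.1]
  rw [KEY]
  have hsplit : (∫ t in (0 : ℝ)..S, a t * (ξ t + η t))
      = (∫ t in (0 : ℝ)..S, a t * ξ t) + ∫ t in (0 : ℝ)..S, a t * η t := by
    rw [← intervalIntegral.integral_add (f := fun t => a t * ξ t) (g := fun t => a t * η t) ((ha_cont.mul hξ).intervalIntegrable _ _)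
      ((ha_cont.mul hη).intervalIntegrable _ _)]
    apply intervalIntegral.integral_congr
    intro t _
    show a t * (ξ t + η t) = a t * ξ t + a t * η t
    ring
  rw [hsplit]
  ring
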